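/- Let w > 0, σ ≥ 0, assume D ∩ C_σ is nonempty, and let the reference parameters evolve as r_x(t) = (T̂_w^{n_x})^t r_x(0) and r_u(t) = (T̂_w^{n_u})^t r_u(0) for t ∈ ℕ. Let (x̊(t), ů(t)) denote the unique minimizer of V_h with reference (r_x(t), r_u(t)) over D ∩ C_σ, and write x̊(t) = (x̊_e(t), x̊_s(t), x̊_c(t)). Then x̊(t) = (T̂_w^{n_x})^t x̊(0) and ů(t) = (T̂_w^{n_u})^t ů(0) for all t ∈ ℕ; consequently, the trajectory x̊_e(t) + x̊_c(t) equals x̊_e(0) + x̊_s(0)·sin(w t) + x̊_c(0)·cos(w t) for all t ∈ ℕ, i.e., the optimal artificial harmonic references at subsequent times define a single harmonic trajectory parameterized by (x̊(0), ů(0)). -/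

import Mathlib

open Matrix Filter

/-- Vectors in `ℝ^n`. -/
abbrev RVec (n : ℕ) := Fin n → ℝ

/-- A parameter triple `(v_e, v_s, v_c) ∈ (ℝ^m)³` of a harmonic signal. -/
abbrev HTriple (n : ℕ) := RVec n × RVec n × RVec n

/-- A parameter pair `((x̂_e, x̂_s, x̂_c), (û_e, û_s, û_c))`. -/
abbrev HParams (nx nu : ℕ) := HTriple nx × HTriple nu

/-- Value at (relative) time `k` of the harmonic signal parameterized by the triple `v`
with frequency `w`: `v_e + v_s sin(w k) + v_c cos(w k)`. -/
noncomputable def hSeq {m : ℕ} (w : ℝ) (v : HTriple m) (k : ℕ) : RVec m :=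
  v.1 + Real.sin (w * (k : ℝ)) • v.2.1 + Real.cos (w * (k : ℝ)) • v.2.2

/-- The transform `T̂_w^m` acting on parameter triples: the identity acts on `v_e` and the
rotation `T_w^m = [[cos w · I, -sin w · I], [sin w · I, cos w · I]]` acts on `(v_s, v_c)`. -/
noncomputable def hatT {m : ℕ} (w : ℝ) (v : HTriple m) : HTriple m :=
  (v.1, Real.cos w • v.2.1 - Real.sin w • v.2.2, Real.sin w • v.2.1 + Real.cos w • v.2.2)

/-- Membership in the set `D` (harmonic parameters consistent with the dynamics `x⁺ = Ax + Bu`). -/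
def inD {nx nu : ℕ} (A : Matrix (Fin nx) (Fin nx) ℝ) (B : Matrix (Fin nx) (Fin nu) ℝ)
    (w : ℝ) (p : HParams nx nu) : Prop :=
  p.1.1 = A.mulVec p.1.1 + B.mulVec p.2.1 ∧
  Real.cos w • p.1.2.1 - Real.sin w • p.1.2.2 = A.mulVec p.1.2.1 + B.mulVec p.2.2.1 ∧
  Real.sin w • p.1.2.1 + Real.cos w • p.1.2.2 = A.mulVec p.1.2.2 + B.mulVec p.2.2.2

/-- Membership in the set `C_σ` (second-order-cone conditions guaranteeing constraint
satisfaction of the harmonic signal). -/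
def inC {nx nu ny : ℕ} (E : Matrix (Fin ny) (Fin nx) ℝ) (F : Matrix (Fin ny) (Fin nu) ℝ)
    (ylo yhi : RVec ny) (σ : ℝ) (p : HParams nx nu) : Prop :=
  ∀ i : Fin ny,
    Real.sqrt ((E.mulVec p.1.2.1 + F.mulVec p.2.2.1) i ^ 2
        + (E.mulVec p.1.2.2 + F.mulVec p.2.2.2) i ^ 2)
      ≤ yhi i - σ - (E.mulVec p.1.1 + F.mulVec p.2.1) i ∧
    Real.sqrt ((E.mulVec p.1.2.1 + F.mulVec p.2.2.1) i ^ 2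
        + (E.mulVec p.1.2.2 + F.mulVec p.2.2.2) i ^ 2)
      ≤ (E.mulVec p.1.1 + F.mulVec p.2.1) i - ylo i - σ

/-- The set `D ∩ C_σ` of admissible harmonic parameters. -/
def paramSet {nx nu ny : ℕ} (A : Matrix (Fin nx) (Fin nx) ℝ) (B : Matrix (Fin nx) (Fin nu) ℝ)
    (E : Matrix (Fin ny) (Fin nx) ℝ) (F : Matrix (Fin ny) (Fin nu) ℝ)
    (ylo yhi : RVec ny) (w σ : ℝ) : Set (HParams nx nu) :=
  {p | inD A B w p ∧ inC E F ylo yhi σ p}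

/-- The quadratic form `‖v‖²_M = vᵀ M v`. -/
def quadForm {n : ℕ} (M : Matrix (Fin n) (Fin n) ℝ) (v : RVec n) : ℝ :=
  v ⬝ᵥ M.mulVec v

/-- The offset cost `V_h` with reference parameters `r` evaluated at parameters `p`. -/
def Vh {nx nu : ℕ} (Te Th : Matrix (Fin nx) (Fin nx) ℝ) (Se Sh : Matrix (Fin nu) (Fin nu) ℝ)
    (r p : HParams nx nu) : ℝ :=
  quadForm Te (p.1.1 - r.1.1) + quadForm Th (p.1.2.1 - r.1.2.1)
    + quadForm Th (p.1.2.2 - r.1.2.2)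
    + quadForm Se (p.2.1 - r.2.1) + quadForm Sh (p.2.2.1 - r.2.2.1)
    + quadForm Sh (p.2.2.2 - r.2.2.2)

/-- `p` is the unique minimizer of `f` on `S`. -/
def IsUniqueMinOn {α : Type*} (f : α → ℝ) (S : Set α) (p : α) : Prop :=
  p ∈ S ∧ ∀ q ∈ S, q ≠ p → f p < f q

/-- `(xs, us, p)` is a feasible solution of the HMPC optimization problem for the state `x`. -/
def FeasSol {nx nu ny : ℕ} (A : Matrix (Fin nx) (Fin nx) ℝ) (B : Matrix (Fin nx) (Fin nu) ℝ)
    (E : Matrix (Fin ny) (Fin nx) ℝ) (F : Matrix (Fin ny) (Fin nu) ℝ)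
    (ylo yhi : RVec ny) (w σ : ℝ) (N : ℕ) (x : RVec nx)
    (xs : ℕ → RVec nx) (us : ℕ → RVec nu) (p : HParams nx nu) : Prop :=
  xs 0 = x ∧
  (∀ k < N, xs (k + 1) = A.mulVec (xs k) + B.mulVec (us k)) ∧
  (∀ k < N, ∀ i, ylo i ≤ (E.mulVec (xs k) + F.mulVec (us k)) i
      ∧ (E.mulVec (xs k) + F.mulVec (us k)) i ≤ yhi i) ∧
  xs N = hSeq w p.1 N ∧
  inD A B w p ∧ inC E F ylo yhi σ p

/-- `x` belongs to the feasibility region of the HMPC optimization problem. -/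
def Feasible {nx nu ny : ℕ} (A : Matrix (Fin nx) (Fin nx) ℝ) (B : Matrix (Fin nx) (Fin nu) ℝ)
    (E : Matrix (Fin ny) (Fin nx) ℝ) (F : Matrix (Fin ny) (Fin nu) ℝ)
    (ylo yhi : RVec ny) (w σ : ℝ) (N : ℕ) (x : RVec nx) : Prop :=
  ∃ xs us p, FeasSol A B E F ylo yhi w σ N x xs us p

/-- The HMPC cost `J` of a solution `(xs, us, p)` with reference parameters `r`. -/
noncomputable def Jcost {nx nu : ℕ} (Q Te Th : Matrix (Fin nx) (Fin nx) ℝ)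
    (R Se Sh : Matrix (Fin nu) (Fin nu) ℝ) (w : ℝ) (N : ℕ) (r : HParams nx nu)
    (xs : ℕ → RVec nx) (us : ℕ → RVec nu) (p : HParams nx nu) : ℝ :=
  (∑ k ∈ Finset.range N,
      (quadForm Q (xs k - hSeq w p.1 k) + quadForm R (us k - hSeq w p.2 k)))
    + Vh Te Th Se Sh r p

/-- `(xs, us, p)` is an optimal solution of the HMPC optimization problem for state `x` and
reference parameters `r`. -/
noncomputable def OptSol {nx nu ny : ℕ} (A : Matrix (Fin nx) (Fin nx) ℝ)
    (B : Matrix (Fin nx) (Fin nu) ℝ)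
    (E : Matrix (Fin ny) (Fin nx) ℝ) (F : Matrix (Fin ny) (Fin nu) ℝ)
    (ylo yhi : RVec ny) (Q Te Th : Matrix (Fin nx) (Fin nx) ℝ)
    (R Se Sh : Matrix (Fin nu) (Fin nu) ℝ) (w σ : ℝ) (N : ℕ) (r : HParams nx nu)
    (x : RVec nx) (xs : ℕ → RVec nx) (us : ℕ → RVec nu) (p : HParams nx nu) : Prop :=
  FeasSol A B E F ylo yhi w σ N x xs us p ∧
  ∀ xs' us' p', FeasSol A B E F ylo yhi w σ N x xs' us' p' →
    Jcost Q Te Th R Se Sh w N r xs us p ≤ Jcost Q Te Th R Se Sh w N r xs' us' p'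

/-- The optimal value `H*(x; r)` of the HMPC optimization problem. -/
noncomputable def Hstar {nx nu ny : ℕ} (A : Matrix (Fin nx) (Fin nx) ℝ)
    (B : Matrix (Fin nx) (Fin nu) ℝ)
    (E : Matrix (Fin ny) (Fin nx) ℝ) (F : Matrix (Fin ny) (Fin nu) ℝ)
    (ylo yhi : RVec ny) (Q Te Th : Matrix (Fin nx) (Fin nx) ℝ)
    (R Se Sh : Matrix (Fin nu) (Fin nu) ℝ) (w σ : ℝ) (N : ℕ) (r : HParams nx nu)
    (x : RVec nx) : ℝ :=
  sInf {J : ℝ | ∃ xs us p, FeasSol A B E F ylo yhi w σ N x xs us p ∧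
    J = Jcost Q Te Th R Se Sh w N r xs us p}

/-- The controllability matrix `[B, AB, …, A^{ν−1}B]` of the pair `(A, B)`. -/
def ctrbMat {nx nu : ℕ} (A : Matrix (Fin nx) (Fin nx) ℝ) (B : Matrix (Fin nx) (Fin nu) ℝ)
    (ν : ℕ) : Matrix (Fin nx) (Fin ν × Fin nu) ℝ :=
  Matrix.of fun i q => ((A ^ (q.1 : ℕ)) * B) i q.2

/-- Squared Euclidean norm of a vector. -/
def nsq {n : ℕ} (v : RVec n) : ℝ := ∑ i, v i ^ 2

/-- Squared Euclidean norm of a parameter pair. -/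
def pNsq {nx nu : ℕ} (p : HParams nx nu) : ℝ :=
  nsq p.1.1 + nsq p.1.2.1 + nsq p.1.2.2 + nsq p.2.1 + nsq p.2.2.1 + nsq p.2.2.2

/-- `f` is `μ`-strongly convex on the parameter space:
`f z − f y ≥ ⟨∇f(y), z − y⟩ + (μ/2)‖z − y‖²` for all `z, y`. -/
def StrConvVh {nx nu : ℕ} (μ : ℝ) (f : HParams nx nu → ℝ) : Prop :=
  ∀ z y : HParams nx nu, f z - f y ≥ (fderiv ℝ f y) (z - y) + μ / 2 * pNsq (z - y)

/-- The rotation matrix `T_w^m = [[cos w · I, −sin w · I], [sin w · I, cos w · I]] ∈ ℝ^{2m×2m}`. -/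
noncomputable def TwMat (m : ℕ) (w : ℝ) : Matrix (Fin m ⊕ Fin m) (Fin m ⊕ Fin m) ℝ :=
  Matrix.fromBlocks (Real.cos w • (1 : Matrix (Fin m) (Fin m) ℝ))
    (-(Real.sin w • (1 : Matrix (Fin m) (Fin m) ℝ)))
    (Real.sin w • (1 : Matrix (Fin m) (Fin m) ℝ))
    (Real.cos w • (1 : Matrix (Fin m) (Fin m) ℝ))

/-- The matrix `T̂_w^m = diag(I_m, T_w^m) ∈ ℝ^{3m×3m}`. -/
noncomputable def ThatMat (m : ℕ) (w : ℝ) :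
    Matrix (Fin m ⊕ (Fin m ⊕ Fin m)) (Fin m ⊕ (Fin m ⊕ Fin m)) ℝ :=
  Matrix.fromBlocks (1 : Matrix (Fin m) (Fin m) ℝ) 0 0 (TwMat m w)

section Aux

lemma hatT_hatT {m : ℕ} (a b : ℝ) (v : HTriple m) :
    hatT a (hatT b v) = hatT (a + b) v := by
  simp only [hatT]
  refine Prod.ext rfl (Prod.ext ?_ ?_) <;>
  · funext i
    simp only [Pi.add_apply, Pi.sub_apply, Pi.smul_apply, smul_eq_mul,
      Real.cos_add, Real.sin_add]
    ring

lemma hatT_zero {m : ℕ} (v : HTriple m) : hatT 0 v = v := by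
  simp [hatT]

lemma hatT_iter {m : ℕ} (w : ℝ) (t : ℕ) (v : HTriple m) :
    (hatT w)^[t] v = hatT (w * t) v := by
  induction t with
  | zero => simp [hatT_zero]
  | succ t ih =>
      rw [Function.iterate_succ_apply', ih, hatT_hatT]
      congr 1
      push_cast
      ring

/-- The rotation acting on parameter pairs. -/
noncomputable def rotP {nx nu : ℕ} (θ : ℝ) (p : HParams nx nu) : HParams nx nu :=
  (hatT θ p.1, hatT θ p.2)

lemma rotP_rotP {nx nu : ℕ} (a b : ℝ) (p : HParams nx nu) :
    rotP a (rotP b p) = rotP (a + b) p := by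
  simp [rotP, hatT_hatT]

lemma rotP_neg_cancel {nx nu : ℕ} (θ : ℝ) (p : HParams nx nu) :
    rotP θ (rotP (-θ) p) = p := by
  rw [rotP_rotP, add_neg_cancel]
  simp [rotP, hatT_zero]

lemma quad_rot {n : ℕ} (M : Matrix (Fin n) (Fin n) ℝ) (θ : ℝ) (a b : RVec n) :
    quadForm M (Real.cos θ • a - Real.sin θ • b)
      + quadForm M (Real.sin θ • a + Real.cos θ • b)
    = quadForm M a + quadForm M b := by
  simp only [quadForm, Matrix.mulVec_add, Matrix.mulVec_sub, Matrix.mulVec_smul,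
    dotProduct_add, dotProduct_sub, add_dotProduct, sub_dotProduct,
    smul_dotProduct, dotProduct_smul, smul_eq_mul]
  linear_combination (a ⬝ᵥ M.mulVec a + b ⬝ᵥ M.mulVec b) * Real.sin_sq_add_cos_sq θ

lemma Vh_rot {nx nu : ℕ} (Te Th : Matrix (Fin nx) (Fin nx) ℝ)
    (Se Sh : Matrix (Fin nu) (Fin nu) ℝ) (θ : ℝ) (r p : HParams nx nu) :
    Vh Te Th Se Sh (rotP θ r) (rotP θ p) = Vh Te Th Se Sh r p := by
  have h1 : ∀ {k : ℕ} (x y u v : RVec k),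
      (Real.cos θ • x - Real.sin θ • y) - (Real.cos θ • u - Real.sin θ • v)
      = Real.cos θ • (x - u) - Real.sin θ • (y - v) := by intros; module
  have h2 : ∀ {k : ℕ} (x y u v : RVec k),
      (Real.sin θ • x + Real.cos θ • y) - (Real.sin θ • u + Real.cos θ • v)
      = Real.sin θ • (x - u) + Real.cos θ • (y - v) := by intros; module
  simp only [Vh, rotP, hatT, h1, h2]
  have q1 := quad_rot Th θ (p.1.2.1 - r.1.2.1) (p.1.2.2 - r.1.2.2)
  have q2 := quad_rot Sh θ (p.2.2.1 - r.2.2.1) (p.2.2.2 - r.2.2.2)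
  linarith

lemma inD_rot {nx nu : ℕ} (A : Matrix (Fin nx) (Fin nx) ℝ)
    (B : Matrix (Fin nx) (Fin nu) ℝ) (w θ : ℝ) (p : HParams nx nu)
    (h : inD A B w p) : inD A B w (rotP θ p) := by
  obtain ⟨h1, h2, h3⟩ := h
  have lin : ∀ {k l : ℕ} (M : Matrix (Fin k) (Fin l) ℝ) (c d : ℝ) (x y : RVec l),
      M.mulVec (c • x + d • y) = c • M.mulVec x + d • M.mulVec y := by
    intros k l M c d x y
    rw [Matrix.mulVec_add, Matrix.mulVec_smul, Matrix.mulVec_smul]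
  refine ⟨h1, ?_, ?_⟩
  · show Real.cos w • (Real.cos θ • p.1.2.1 - Real.sin θ • p.1.2.2)
      - Real.sin w • (Real.sin θ • p.1.2.1 + Real.cos θ • p.1.2.2)
      = A.mulVec (Real.cos θ • p.1.2.1 - Real.sin θ • p.1.2.2)
      + B.mulVec (Real.cos θ • p.2.2.1 - Real.sin θ • p.2.2.2)
    have e : A.mulVec (Real.cos θ • p.1.2.1 - Real.sin θ • p.1.2.2)
        + B.mulVec (Real.cos θ • p.2.2.1 - Real.sin θ • p.2.2.2)
        = Real.cos θ • (A.mulVec p.1.2.1 + B.mulVec p.2.2.1)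
          - Real.sin θ • (A.mulVec p.1.2.2 + B.mulVec p.2.2.2) := by
      rw [sub_eq_add_neg, sub_eq_add_neg, ← neg_smul, ← neg_smul, lin, lin]
      module
    rw [e, ← h2, ← h3]
    module
  · show Real.sin w • (Real.cos θ • p.1.2.1 - Real.sin θ • p.1.2.2)
      + Real.cos w • (Real.sin θ • p.1.2.1 + Real.cos θ • p.1.2.2)
      = A.mulVec (Real.sin θ • p.1.2.1 + Real.cos θ • p.1.2.2)
      + B.mulVec (Real.sin θ • p.2.2.1 + Real.cos θ • p.2.2.2)
    have e : A.mulVec (Real.sin θ • p.1.2.1 + Real.cos θ • p.1.2.2)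
        + B.mulVec (Real.sin θ • p.2.2.1 + Real.cos θ • p.2.2.2)
        = Real.sin θ • (A.mulVec p.1.2.1 + B.mulVec p.2.2.1)
          + Real.cos θ • (A.mulVec p.1.2.2 + B.mulVec p.2.2.2) := by
      rw [lin, lin]; module
    rw [e, ← h2, ← h3]
    module

lemma inC_rot {nx nu ny : ℕ} (E : Matrix (Fin ny) (Fin nx) ℝ)
    (F : Matrix (Fin ny) (Fin nu) ℝ) (ylo yhi : RVec ny) (σ θ : ℝ)
    (p : HParams nx nu) (h : inC E F ylo yhi σ p) :
    inC E F ylo yhi σ (rotP θ p) := by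
  intro i
  have lin : ∀ {k l : ℕ} (M : Matrix (Fin k) (Fin l) ℝ) (c d : ℝ) (x y : RVec l),
      M.mulVec (c • x + d • y) = c • M.mulVec x + d • M.mulVec y := by
    intros k l M c d x y
    rw [Matrix.mulVec_add, Matrix.mulVec_smul, Matrix.mulVec_smul]
  set ys := E.mulVec p.1.2.1 + F.mulVec p.2.2.1 with hys
  set yc := E.mulVec p.1.2.2 + F.mulVec p.2.2.2 with hyc
  have hs : E.mulVec (rotP θ p).1.2.1 + F.mulVec (rotP θ p).2.2.1
      = Real.cos θ • ys - Real.sin θ • yc := by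
    show E.mulVec (Real.cos θ • p.1.2.1 - Real.sin θ • p.1.2.2)
      + F.mulVec (Real.cos θ • p.2.2.1 - Real.sin θ • p.2.2.2) = _
    rw [sub_eq_add_neg, sub_eq_add_neg, ← neg_smul, ← neg_smul, lin, lin, hys, hyc]
    module
  have hc : E.mulVec (rotP θ p).1.2.2 + F.mulVec (rotP θ p).2.2.2
      = Real.sin θ • ys + Real.cos θ • yc := by
    show E.mulVec (Real.sin θ • p.1.2.1 + Real.cos θ • p.1.2.2)
      + F.mulVec (Real.sin θ • p.2.2.1 + Real.cos θ • p.2.2.2) = _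
    rw [lin, lin, hys, hyc]
    module
  have he : E.mulVec (rotP θ p).1.1 + F.mulVec (rotP θ p).2.1
      = E.mulVec p.1.1 + F.mulVec p.2.1 := rfl
  have hsq : (E.mulVec (rotP θ p).1.2.1 + F.mulVec (rotP θ p).2.2.1) i ^ 2
      + (E.mulVec (rotP θ p).1.2.2 + F.mulVec (rotP θ p).2.2.2) i ^ 2
      = ys i ^ 2 + yc i ^ 2 := by
    rw [hs, hc]
    simp only [Pi.add_apply, Pi.sub_apply, Pi.smul_apply, smul_eq_mul]
    linear_combination (ys i ^ 2 + yc i ^ 2) * Real.sin_sq_add_cos_sq θ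
  rw [hsq, he]
  exact h i

lemma paramSet_rot {nx nu ny : ℕ} (A : Matrix (Fin nx) (Fin nx) ℝ)
    (B : Matrix (Fin nx) (Fin nu) ℝ) (E : Matrix (Fin ny) (Fin nx) ℝ)
    (F : Matrix (Fin ny) (Fin nu) ℝ) (ylo yhi : RVec ny) (w σ θ : ℝ)
    (p : HParams nx nu) (h : p ∈ paramSet A B E F ylo yhi w σ) :
    rotP θ p ∈ paramSet A B E F ylo yhi w σ :=
  ⟨inD_rot A B w θ p h.1, inC_rot E F ylo yhi σ θ p h.2⟩

end Aux

/-- when the reference parameters evolve by `T̂_w`, the unique minimizers of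
`V_h` over `D ∩ C_σ` also evolve by `T̂_w`, so the optimal artificial harmonic references at
subsequent times define a single harmonic trajectory parameterized by the minimizer at `t = 0`. -/
theorem statement10 {nx nu ny : ℕ}
    (A : Matrix (Fin nx) (Fin nx) ℝ) (B : Matrix (Fin nx) (Fin nu) ℝ)
    (E : Matrix (Fin ny) (Fin nx) ℝ) (F : Matrix (Fin ny) (Fin nu) ℝ)
    (ylo yhi : RVec ny) (hy : ∀ i, ylo i < yhi i)
    (w σ : ℝ) (hw : 0 < w) (hσ : 0 ≤ σ)
    (Te Th : Matrix (Fin nx) (Fin nx) ℝ) (Se Sh : Matrix (Fin nu) (Fin nu) ℝ)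
    (hTe : Te.PosDef) (hSe : Se.PosDef)
    (hTh : Th.PosDef) (hThd : Th.IsDiag) (hSh : Sh.PosDef) (hShd : Sh.IsDiag)
    (hne : (paramSet A B E F ylo yhi w σ).Nonempty)
    (r : ℕ → HParams nx nu)
    (hr : ∀ t, r t = ((hatT w)^[t] (r 0).1, (hatT w)^[t] (r 0).2))
    (rmin : ℕ → HParams nx nu)
    (hmin : ∀ t, IsUniqueMinOn (Vh Te Th Se Sh (r t))
      (paramSet A B E F ylo yhi w σ) (rmin t)) :
    (∀ t, rmin t = ((hatT w)^[t] (rmin 0).1, (hatT w)^[t] (rmin 0).2)) ∧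
    (∀ t : ℕ, (rmin t).1.1 + (rmin t).1.2.2 = hSeq w (rmin 0).1 t) := by
  have key : ∀ t : ℕ, rmin t = rotP (w * t) (rmin 0) := by
    intro t
    set S := paramSet A B E F ylo yhi w σ with hS
    set θ : ℝ := w * t with hθ
    have hrt : r t = rotP θ (r 0) := by
      rw [hr t]
      simp only [rotP, hatT_iter]
      rfl
    have hmem : rotP θ (rmin 0) ∈ S := paramSet_rot A B E F ylo yhi w σ θ _ (hmin 0).1
    have hlt : ∀ q ∈ S, q ≠ rotP θ (rmin 0) →
        Vh Te Th Se Sh (r t) (rotP θ (rmin 0)) < Vh Te Th Se Sh (r t) q := by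
      intro q hq hneq
      have hq' : rotP (-θ) q ∈ S := paramSet_rot A B E F ylo yhi w σ (-θ) _ hq
      have hne2 : rotP (-θ) q ≠ rmin 0 := by
        intro hcontra
        apply hneq
        rw [← rotP_neg_cancel θ q, hcontra]
      have hlt0 := (hmin 0).2 _ hq' hne2
      have e1 : Vh Te Th Se Sh (r t) (rotP θ (rmin 0)) = Vh Te Th Se Sh (r 0) (rmin 0) := by
        rw [hrt, Vh_rot]
      have e2 : Vh Te Th Se Sh (r t) q = Vh Te Th Se Sh (r 0) (rotP (-θ) q) := by
        conv_lhs => rw [hrt, ← rotP_neg_cancel θ q, Vh_rot]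
      rw [e1, e2]
      exact hlt0
    by_contra hcontra
    have h1 := (hmin t).2 _ hmem (fun h => hcontra h.symm)
    have h2 := hlt (rmin t) (hmin t).1 hcontra
    linarith
  constructor
  · intro t
    rw [key t]
    simp only [rotP, hatT_iter]
  · intro t
    rw [key t]
    show (rotP (w * t) (rmin 0)).1.1 + (rotP (w * t) (rmin 0)).1.2.2 = _
    show (rmin 0).1.1 + (Real.sin (w * t) • (rmin 0).1.2.1
        + Real.cos (w * t) • (rmin 0).1.2.2) = hSeq w (rmin 0).1 t
    rw [hSeq, add_assoc]
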